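/- The number of permutations in S_n avoiding the patterns 2-1-3 and 12-3 equals the Motzkin number M_n. -/

import Mathlib

/-- Motzkin numbers: `M 0 = 1`, `M (n+1) = M n + ∑_{k=0}^{n-1} M k * M (n-1-k)`. -/
def motzkin : ℕ → ℕ
  | 0 => 1
  | n + 1 => motzkin n + ∑ k ∈ (Finset.range n).attach,
      motzkin k.1 * motzkin (n - 1 - k.1)
decreasing_by
  all_goals (try exact Nat.lt_succ_self n)
  all_goals (have := Finset.mem_range.mp k.2; omega)

/-- `π` contains the classical pattern 2-1-3: indices `i < j < k` with `π j < π i < π k`. -/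
def Contains213 {n : ℕ} (π : Equiv.Perm (Fin n)) : Prop :=
  ∃ i j k : Fin n, i < j ∧ j < k ∧ π j < π i ∧ π i < π k

/-- `π` contains the generalized pattern 12-3 (first two positions adjacent). -/
def Contains12'3 {n : ℕ} (π : Equiv.Perm (Fin n)) : Prop :=
  ∃ i i' k : Fin n, (i' : ℕ) = (i : ℕ) + 1 ∧ i' < k ∧ π i < π i' ∧ π i' < π k


/-- list contains 2-1-3 -/
def C213L (l : List ℕ) : Prop :=
  ∃ i j k, i < j ∧ j < k ∧ k < l.length ∧ l.getD j 0 < l.getD i 0 ∧ l.getD i 0 < l.getD k 0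

/-- list contains 12-3 -/
def C123L (l : List ℕ) : Prop :=
  ∃ i k, i + 1 < k ∧ k < l.length ∧ l.getD i 0 < l.getD (i+1) 0 ∧ l.getD (i+1) 0 < l.getD k 0

def AvP (l : List ℕ) : Prop := ¬ C213L l ∧ ¬ C123L l

open Classical in
noncomputable def AvS (n : ℕ) : Finset (List ℕ) :=
  ((List.range n).permutations).toFinset.filter AvP

noncomputable def avf (n : ℕ) : ℕ := (AvS n).card

lemma lperm_iff {l : List ℕ} {n : ℕ} :
    l.Perm (List.range n) ↔ (l.length = n ∧ l.Nodup ∧ ∀ x ∈ l, x < n) := by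
  constructor
  · intro h
    refine ⟨by simpa using h.length_eq, h.nodup_iff.mpr (List.nodup_range (n := n)), fun x hx => ?_⟩
    have := h.mem_iff.mp hx
    simpa using this
  · rintro ⟨hlen, hnd, hbd⟩
    apply List.perm_of_nodup_nodup_toFinset_eq hnd (List.nodup_range (n := n))
    apply Finset.eq_of_subset_of_card_le
    · intro x hx
      simp only [List.mem_toFinset] at hx ⊢
      simpa using hbd x hx
    · rw [List.card_toFinset, (List.nodup_range (n := n)).dedup, List.card_toFinset, hnd.dedup]
      simp [hlen]

lemma mem_AvS {l : List ℕ} {n : ℕ} :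
    l ∈ AvS n ↔ (l.length = n ∧ l.Nodup ∧ (∀ x ∈ l, x < n)) ∧ AvP l := by
  classical
  simp only [AvS, Finset.mem_filter, List.mem_toFinset, List.mem_permutations, lperm_iff]

lemma mem_of_mem_AvS {l : List ℕ} {n v : ℕ} (hl : l ∈ AvS n) (hv : v < n) : v ∈ l := by
  classical
  have : l.Perm (List.range n) := by
    simp only [AvS, Finset.mem_filter, List.mem_toFinset, List.mem_permutations] at hl
    exact hl.1
  exact this.mem_iff.mpr (by simpa using hv)

lemma getD_mem {l : List ℕ} {t : ℕ} (h : t < l.length) : l.getD t 0 ∈ l := by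
  rw [List.getD_eq_getElem _ _ h]; exact List.getElem_mem _

lemma avP_cons_max {m : ℕ} {R : List ℕ} (hR : ∀ x ∈ R, x < m) :
    AvP (m :: R) ↔ AvP R := by
  have glen : (m :: R).length = R.length + 1 := by simp
  have gs : ∀ t, (m :: R).getD (t+1) 0 = R.getD t 0 := by intro t; simp
  constructor
  · rintro ⟨h1, h2⟩
    constructor
    · rintro ⟨i, j, k, hij, hjk, hk, v1, v2⟩
      exact h1 ⟨i+1, j+1, k+1, by omega, by omega, by omega,
        by rw [gs, gs]; exact v1, by rw [gs, gs]; exact v2⟩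
    · rintro ⟨i, k, hik, hk, v1, v2⟩
      refine h2 ⟨i+1, k+1, by omega, by omega, ?_, ?_⟩
      · rw [gs, gs]; exact v1
      · rw [gs, gs]; exact v2
  · rintro ⟨h1, h2⟩
    constructor
    · rintro ⟨i, j, k, hij, hjk, hk, v1, v2⟩
      rcases Nat.eq_zero_or_pos i with hi | hi
      · subst hi
        have hkR : R.getD (k-1) 0 < m := hR _ (getD_mem (by omega))
        obtain ⟨k', rfl⟩ : ∃ k', k = k'+1 := ⟨k-1, by omega⟩
        rw [gs] at v2
        simp only [List.getD_cons_zero] at v2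
        have : R.getD k' 0 < m := hR _ (getD_mem (by omega))
        omega
      · obtain ⟨i', rfl⟩ : ∃ i', i = i'+1 := ⟨i-1, by omega⟩
        obtain ⟨j', rfl⟩ : ∃ j', j = j'+1 := ⟨j-1, by omega⟩
        obtain ⟨k', rfl⟩ : ∃ k', k = k'+1 := ⟨k-1, by omega⟩
        rw [gs, gs] at v1
        rw [gs, gs] at v2
        exact h1 ⟨i', j', k', by omega, by omega, by omega, v1, v2⟩
    · rintro ⟨i, k, hik, hk, v1, v2⟩
      rcases Nat.eq_zero_or_pos i with hi | hi
      · subst hi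
        have hkR : R.getD 0 0 < m := hR _ (getD_mem (by omega))
        rw [show (0:ℕ)+1 = 0+1 from rfl, gs] at v1
        simp only [List.getD_cons_zero] at v1
        omega
      · obtain ⟨i', rfl⟩ : ∃ i', i = i'+1 := ⟨i-1, by omega⟩
        obtain ⟨k', rfl⟩ : ∃ k', k = k'+1 := ⟨k-1, by omega⟩
        rw [show i'+1+1 = (i'+1)+1 from rfl, gs, gs] at v1
        rw [show i'+1+1 = (i'+1)+1 from rfl, gs, gs] at v2
        exact h2 ⟨i', k', by omega, by omega, v1, v2⟩

lemma avP_decomp {a m : ℕ} {B C : List ℕ} (ham : a < m)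
    (hB : ∀ x ∈ B, a < x ∧ x < m) (hC : ∀ x ∈ C, x < a) :
    AvP (a :: m :: B ++ C) ↔ AvP B ∧ AvP C := by
  set l := a :: m :: B ++ C with hl
  have len : l.length = B.length + C.length + 2 := by simp [hl]
  have g0 : l.getD 0 0 = a := rfl
  have g1 : l.getD 1 0 = m := rfl
  have gB : ∀ u, 2 ≤ u → u - 2 < B.length → l.getD u 0 = B.getD (u-2) 0 := by
    intro u h1 h2
    obtain ⟨t, rfl⟩ : ∃ t, u = t + 2 := ⟨u - 2, by omega⟩
    show (B ++ C).getD t 0 = B.getD (t+2-2) 0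
    rw [show t+2-2 = t from by omega]
    rw [List.getD_eq_getElem _ _ (by simp; omega),
        List.getD_eq_getElem _ _ (show t < B.length by omega)]
    rw [List.getElem_append_left (by omega)]
  have gC : ∀ u, 2 + B.length ≤ u → u < l.length →
      l.getD u 0 = C.getD (u - 2 - B.length) 0 := by
    intro u h1 h2
    obtain ⟨t, rfl⟩ : ∃ t, u = t + 2 := ⟨u - 2, by omega⟩
    show (B ++ C).getD t 0 = C.getD (t+2-2-B.length) 0
    rw [show t+2-2-B.length = t-B.length from by omega]
    rw [List.getD_eq_getElem _ _ (by simp [len] at h2 ⊢; omega),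
        List.getD_eq_getElem _ _ (show t-B.length < C.length by simp [len] at h2; omega)]
    rw [List.getElem_append_right (by omega)]
  have vB : ∀ u, 2 ≤ u → u - 2 < B.length → a < l.getD u 0 ∧ l.getD u 0 < m := by
    intro u h1 h2; rw [gB u h1 h2]; exact hB _ (getD_mem (by omega))
  have vC : ∀ u, 2 + B.length ≤ u → u < l.length → l.getD u 0 < a := by
    intro u h1 h2; rw [gC u h1 h2]
    exact hC _ (getD_mem (by simp [len] at h2; omega))
  constructor
  · rintro ⟨h1, h2⟩
    refine ⟨⟨?_, ?_⟩, ?_, ?_⟩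
    · rintro ⟨i, j, k, hij, hjk, hk, v1, v2⟩
      refine h1 ⟨i+2, j+2, k+2, by omega, by omega, by omega, ?_, ?_⟩
      · rw [gB (i+2) (by omega) (by omega), gB (j+2) (by omega) (by omega)]
        simpa using v1
      · rw [gB (i+2) (by omega) (by omega), gB (k+2) (by omega) (by omega)]
        simpa using v2
    · rintro ⟨i, k, hik, hk, v1, v2⟩
      refine h2 ⟨i+2, k+2, by omega, by omega, ?_, ?_⟩
      · rw [gB (i+2) (by omega) (by omega), show i+2+1 = (i+1)+2 by omega,
          gB ((i+1)+2) (by omega) (by omega)]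
        simpa using v1
      · rw [show i+2+1 = (i+1)+2 by omega, gB ((i+1)+2) (by omega) (by omega),
          gB (k+2) (by omega) (by omega)]
        simpa using v2
    · rintro ⟨i, j, k, hij, hjk, hk, v1, v2⟩
      refine h1 ⟨i+2+B.length, j+2+B.length, k+2+B.length, by omega, by omega,
        by omega, ?_, ?_⟩
      · rw [gC (i+2+B.length) (by omega) (by omega), gC (j+2+B.length) (by omega) (by omega),
          show i+2+B.length-2-B.length = i from by omega, show j+2+B.length-2-B.length = j from by omega]
        exact v1
      · rw [gC (i+2+B.length) (by omega) (by omega), gC (k+2+B.length) (by omega) (by omega),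
          show i+2+B.length-2-B.length = i from by omega, show k+2+B.length-2-B.length = k from by omega]
        exact v2
    · rintro ⟨i, k, hik, hk, v1, v2⟩
      refine h2 ⟨i+2+B.length, k+2+B.length, by omega, by omega, ?_, ?_⟩
      · rw [gC (i+2+B.length) (by omega) (by omega), show i+2+B.length+1 = (i+1)+2+B.length by omega,
          gC ((i+1)+2+B.length) (by omega) (by omega),
          show i+2+B.length-2-B.length = i from by omega,
          show (i+1)+2+B.length-2-B.length = i+1 from by omega]
        exact v1
      · rw [show i+2+B.length+1 = (i+1)+2+B.length by omega, gC ((i+1)+2+B.length) (by omega) (by omega),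
          gC (k+2+B.length) (by omega) (by omega),
          show (i+1)+2+B.length-2-B.length = i+1 from by omega,
          show k+2+B.length-2-B.length = k from by omega]
        exact v2
  · rintro ⟨⟨hB1, hB2⟩, hC1, hC2⟩
    constructor
    · rintro ⟨i, j, k, hij, hjk, hk, v1, v2⟩
      -- case on region of k
      rcases (by omega : (2 ≤ k ∧ k - 2 < B.length) ∨ 2 + B.length ≤ k) with hkB | hkC
      · -- k in B
        have hkv := vB k hkB.1 hkB.2
        rcases (by omega : i = 0 ∨ i = 1 ∨ (2 ≤ i ∧ i - 2 < B.length) ∨ 2 + B.length ≤ i)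
          with hi | hi | hiB | hiC
        · -- i = 0 : value a ; need j with value < a before k : j must be in B or 0/1
          subst hi; rw [g0] at v1 v2
          rcases (by omega : j = 1 ∨ (2 ≤ j ∧ j - 2 < B.length)) with hj | hjB
          · subst hj; rw [g1] at v1; omega
          · have := vB j hjB.1 hjB.2; omega
        · subst hi; rw [g1] at v1 v2; omega
        · -- i in B, so j in B : pattern in B
          rcases (by omega : 2 ≤ j ∧ j - 2 < B.length) with ⟨hj1, hj2⟩
          rw [gB i hiB.1 hiB.2, gB j hj1 hj2] at v1
          rw [gB i hiB.1 hiB.2, gB k hkB.1 hkB.2] at v2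
          exact hB1 ⟨i-2, j-2, k-2, by omega, by omega, by omega, v1, v2⟩
        · omega
      · -- k in C : value < a
        have hkv := vC k hkC (by omega)
        rcases (by omega : i = 0 ∨ i = 1 ∨ (2 ≤ i ∧ i - 2 < B.length) ∨ 2 + B.length ≤ i)
          with hi | hi | hiB | hiC
        · subst hi; rw [g0] at v2; omega
        · subst hi; rw [g1] at v2; omega
        · have := vB i hiB.1 hiB.2; omega
        · -- i in C, so j in C : pattern in C
          have hjC : 2 + B.length ≤ j := by omega
          rw [gC i hiC (by omega), gC j hjC (by omega)] at v1
          rw [gC i hiC (by omega), gC k hkC (by omega)] at v2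
          exact hC1 ⟨i-2-B.length, j-2-B.length, k-2-B.length, by omega, by omega,
            by omega, v1, v2⟩
    · rintro ⟨i, k, hik, hk, v1, v2⟩
      rcases (by omega : i = 0 ∨ i = 1 ∨ (2 ≤ i ∧ i - 2 < B.length) ∨ 2 + B.length ≤ i)
        with hi | hi | hiB | hiC
      · -- i = 0 : next is m, k's value must exceed m, impossible
        subst hi
        rw [show (0:ℕ)+1 = 1 by rfl, g1] at v2
        rcases (by omega : (2 ≤ k ∧ k - 2 < B.length) ∨ 2 + B.length ≤ k) with hkB | hkC
        · have := vB k hkB.1 hkB.2; omega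
        · have := vC k hkC (by omega); omega
      · -- i = 1 : value m ; m < l[2] impossible
        subst hi
        rw [g1] at v1
        rw [show (1:ℕ)+1 = 2 from rfl] at v1
        rcases (by omega : (2 ≤ 2 ∧ 2 - 2 < B.length) ∨ 2 + B.length ≤ 2) with h2B | h2C
        · have := vB 2 h2B.1 h2B.2; omega
        · have := vC 2 h2C (by omega); omega
      · -- i in B
        rcases (by omega : i + 1 - 2 < B.length ∨ i + 1 - 2 = B.length) with hi1B | hi1C
        · -- i+1 in B ; then k must be in B
          rw [gB i hiB.1 hiB.2, gB (i+1) (by omega) hi1B] at v1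
          have hv1 : a < (a :: m :: B ++ C).getD (i+1) 0 := (vB (i+1) (by omega) hi1B).1
          rcases (by omega : (2 ≤ k ∧ k - 2 < B.length) ∨ 2 + B.length ≤ k) with hkB | hkC
          · rw [gB (i+1) (by omega) hi1B] at hv1
            rw [gB (i+1) (by omega) hi1B, gB k hkB.1 hkB.2] at v2
            exact hB2 ⟨i-2, k-2, by omega, by omega,
              by rw [show i-2+1 = i+1-2 by omega]; exact v1,
              by rw [show i-2+1 = i+1-2 by omega]; exact v2⟩
          · have := vC k hkC (by omega)
            rw [gB (i+1) (by omega) hi1B] at v2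
            have := (vB (i+1) (by omega) hi1B)
            rw [gB (i+1) (by omega) hi1B] at this
            omega
        · -- i+1 is first of C : descent, contradiction with v1
          have hvi := vB i hiB.1 hiB.2
          have hvi1 := vC (i+1) (by omega) (by omega)
          omega
      · -- i in C, so i+1, k in C
        rw [gC i hiC (by omega), gC (i+1) (by omega) (by omega)] at v1
        rw [gC (i+1) (by omega) (by omega), gC k (by omega) (by omega)] at v2
        refine hC2 ⟨i-2-B.length, k-2-B.length, by omega, by omega, ?_, ?_⟩
        · rw [show i-2-B.length+1 = i+1-2-B.length by omega]; exact v1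
        · rw [show i-2-B.length+1 = i+1-2-B.length by omega]; exact v2

lemma avP_map_add {c : ℕ} {b : List ℕ} : AvP (b.map (· + c)) ↔ AvP b := by
  have hlen : (b.map (· + c)).length = b.length := by simp
  have g : ∀ t, t < b.length → (b.map (· + c)).getD t 0 = b.getD t 0 + c := by
    intro t ht
    rw [List.getD_eq_getElem _ _ (by simpa using ht), List.getD_eq_getElem _ _ ht,
      List.getElem_map]
  constructor
  · rintro ⟨h1, h2⟩
    constructor
    · rintro ⟨i, j, k, hij, hjk, hk, v1, v2⟩
      refine h1 ⟨i, j, k, hij, hjk, by omega, ?_, ?_⟩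
      · rw [g j (by omega), g i (by omega)]; omega
      · rw [g i (by omega), g k (by omega)]; omega
    · rintro ⟨i, k, hik, hk, v1, v2⟩
      refine h2 ⟨i, k, hik, by omega, ?_, ?_⟩
      · rw [g i (by omega), g (i+1) (by omega)]; omega
      · rw [g (i+1) (by omega), g k (by omega)]; omega
  · rintro ⟨h1, h2⟩
    constructor
    · rintro ⟨i, j, k, hij, hjk, hk, v1, v2⟩
      rw [hlen] at hk
      rw [g j (by omega), g i (by omega)] at v1
      rw [g i (by omega), g k (by omega)] at v2
      exact h1 ⟨i, j, k, hij, hjk, hk, by omega, by omega⟩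
    · rintro ⟨i, k, hik, hk, v1, v2⟩
      rw [hlen] at hk
      rw [g i (by omega), g (i+1) (by omega)] at v1
      rw [g (i+1) (by omega), g k (by omega)] at v2
      exact h2 ⟨i, k, hik, hk, by omega, by omega⟩


lemma structL {n a : ℕ} {l : List ℕ} (hl : l ∈ AvS (n+1)) (ha : l.getD 0 0 = a)
    (han : a < n) :
    ∃ B C, l = a :: n :: B ++ C ∧ (∀ x ∈ B, a < x ∧ x < n) ∧ (∀ x ∈ C, x < a) := by
  obtain ⟨⟨hlen, hnd, hbd⟩, hAv⟩ := mem_AvS.mp hl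
  rcases l with _ | ⟨x0, l1⟩
  · simp at hlen
  rcases l1 with _ | ⟨x1, R⟩
  · simp at hlen; omega
  obtain rfl : a = x0 := ha.symm
  have hgs : ∀ t, (a :: x1 :: R).getD (t+2) 0 = R.getD t 0 := by intro t; simp
  have hlenR : R.length = n - 1 := by simp at hlen; omega
  -- second entry is n
  have hx1 : x1 = n := by
    by_contra hne
    have hnmem : n ∈ a :: x1 :: R := mem_of_mem_AvS hl (by omega)
    have hnR : n ∈ R := by
      rcases List.mem_cons.mp hnmem with h | h
      · omega
      · rcases List.mem_cons.mp h with h | h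
        · exact absurd h.symm hne
        · exact h
    obtain ⟨t, ht, hteq⟩ := List.mem_iff_getElem.mp hnR
    have hgt : (a :: x1 :: R).getD (t+2) 0 = n := by
      rw [hgs, List.getD_eq_getElem _ _ ht, hteq]
    have hx1a : x1 ≠ a := by
      intro h; subst h; simp [List.Nodup] at hnd
    have hx1n : x1 < n + 1 := hbd x1 (by simp)
    rcases Nat.lt_or_ge x1 a with hlt | hge
    · refine hAv.1 ⟨0, 1, t+2, by omega, by omega, by simp; omega, ?_, ?_⟩
      · show (a :: x1 :: R).getD 1 0 < (a :: x1 :: R).getD 0 0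
        simpa using hlt
      · show (a :: x1 :: R).getD 0 0 < (a :: x1 :: R).getD (t+2) 0
        rw [hgt]; simpa using han
    · refine hAv.2 ⟨0, t+2, by omega, by simp; omega, ?_, ?_⟩
      · show (a :: x1 :: R).getD 0 0 < (a :: x1 :: R).getD (0+1) 0
        simp; omega
      · show (a :: x1 :: R).getD (0+1) 0 < (a :: x1 :: R).getD (t+2) 0
        rw [hgt]; simp; omega
  subst x1
  have hanotR : a ∉ R := by simp at hnd; tauto
  have hnnotR : n ∉ R := by simp at hnd; tauto
  have hRelem : ∀ x ∈ R, x < a ∨ (a < x ∧ x < n) := by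
    intro x hx
    have hxa : x ≠ a := fun h => hanotR (h ▸ hx)
    have hxn : x ≠ n := fun h => hnnotR (h ▸ hx)
    have := hbd x (by simp [hx])
    omega
  have hkey : ∀ j k, j < k → k < R.length → R.getD j 0 < a → a < R.getD k 0 → False := by
    intro j k hjk hk h1 h2
    refine hAv.1 ⟨0, j+2, k+2, by omega, by omega, by simp; omega, ?_, ?_⟩
    · show (a :: n :: R).getD (j+2) 0 < (a :: n :: R).getD 0 0
      rw [hgs]; simpa using h1
    · show (a :: n :: R).getD 0 0 < (a :: n :: R).getD (k+2) 0
      rw [hgs]; simpa using h2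
  refine ⟨R.takeWhile (fun x => a < x), R.dropWhile (fun x => a < x),
    by simp only [List.cons_append, List.takeWhile_append_dropWhile], ?_, ?_⟩
  · intro x hx
    have h1 : a < x := by simpa using List.mem_takeWhile_imp hx
    have h2 := hRelem x ((List.takeWhile_prefix _).sublist.mem hx)
    omega
  · intro x hx
    have hRBC : R.takeWhile (fun x => a < x) ++ R.dropWhile (fun x => a < x) = R :=
      List.takeWhile_append_dropWhile
    set B := R.takeWhile (fun x => a < x) with hB
    set C := R.dropWhile (fun x => a < x) with hCdef
    have hCne : C ≠ [] := by intro h; rw [h] at hx; simp at hx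
    have hhead : ¬ a < C.head hCne := by
      have := List.head_dropWhile_not (fun x => decide (a < x)) (l := R) (by rw [← hCdef]; exact hCne)
      simp only [← hCdef] at this
      simpa using this
    have hheadmem : C.head hCne ∈ R := by
      rw [← hRBC]; exact List.mem_append_right _ (List.head_mem hCne)
    have hheadlt : C.head hCne < a := by
      rcases hRelem _ hheadmem with h | h
      · exact h
      · omega
    obtain ⟨t, ht, hteq⟩ := List.mem_iff_getElem.mp hx
    rcases Nat.eq_zero_or_pos t with rfl | htpos
    · rw [← hteq, ← List.head_eq_getElem]; exact hheadlt
    by_contra hxa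
    have hax : a < x := by
      rcases hRelem x (by rw [← hRBC]; exact List.mem_append_right _ hx) with h | h
      · omega
      · exact h.1
    have hgB : R.getD B.length 0 = C.head hCne := by
      rw [← hRBC, List.getD_eq_getElem _ _ (by simp; omega),
        List.getElem_append_right (le_refl _), List.head_eq_getElem]
      congr 1; omega
    have hgC : R.getD (B.length + t) 0 = x := by
      rw [← hRBC, List.getD_eq_getElem _ _ (by simp; omega),
        List.getElem_append_right (by omega), ← hteq]
      congr 1; omega
    exact hkey B.length (B.length + t) (by omega)
      (by rw [← hRBC]; simp; omega) (by rw [hgB]; exact hheadlt) (by rw [hgC]; exact hax)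

lemma card_head_max (n : ℕ) :
    ((AvS (n+1)).filter (fun l => l.getD 0 0 = n)).card = avf n := by
  classical
  refine Finset.card_bij' (fun l _ => l.tail) (fun r _ => n :: r) ?_ ?_ ?_ ?_
  · intro l hl
    obtain ⟨hl1, hl2⟩ := Finset.mem_filter.mp hl
    obtain ⟨⟨hlen, hnd, hbd⟩, hAv⟩ := mem_AvS.mp hl1
    rcases l with _ | ⟨x, t⟩
    · simp at hlen
    have hxn : x = n := hl2
    subst x
    have htv : ∀ y ∈ t, y < n := by
      intro y hy
      have h1 := hbd y (by simp [hy])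
      have h2 : y ≠ n := by rintro rfl; simp at hnd; tauto
      omega
    refine mem_AvS.mpr ⟨⟨by simpa using hlen, hnd.of_cons, htv⟩, ?_⟩
    exact (avP_cons_max htv).mp hAv
  · intro r hr
    obtain ⟨⟨hlen, hnd, hbd⟩, hAv⟩ := mem_AvS.mp hr
    have htv : ∀ y ∈ r, y < n := hbd
    refine Finset.mem_filter.mpr ⟨mem_AvS.mpr ⟨⟨by simp [hlen], ?_, ?_⟩, ?_⟩, rfl⟩
    · exact List.nodup_cons.mpr ⟨fun h => absurd (hbd n h) (by omega), hnd⟩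
    · intro x hx
      rcases List.mem_cons.mp hx with rfl | hx
      · omega
      · have := hbd x hx; omega
    · exact (avP_cons_max htv).mpr hAv
  · intro l hl
    obtain ⟨hl1, hl2⟩ := Finset.mem_filter.mp hl
    rcases l with _ | ⟨x, t⟩
    · obtain ⟨⟨hlen, _, _⟩, _⟩ := mem_AvS.mp hl1; simp at hlen
    have hxn : x = n := hl2
    subst x
    rfl
  · intro r _
    rfl

lemma map_eq_self {f : ℕ → ℕ} {l : List ℕ} (h : ∀ x ∈ l, f x = x) : l.map f = l := by
  rw [List.map_congr_left h]; simp

lemma filter_split {a : ℕ} {B C : List ℕ} (hB : ∀ x ∈ B, a < x) (hC : ∀ x ∈ C, x < a) :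
    (B ++ C).filter (fun x => a < x) = B ∧ (B ++ C).filter (fun x => x < a) = C := by
  constructor
  · rw [List.filter_append, List.filter_eq_self.mpr (by intro x hx; simpa using hB x hx),
      List.filter_eq_nil_iff.mpr (by intro x hx; have := hC x hx; simp; omega), List.append_nil]
  · rw [List.filter_append, List.filter_eq_nil_iff.mpr
      (by intro x hx; have := hB x hx; simp; omega),
      List.filter_eq_self.mpr (by intro x hx; simpa using hC x hx), List.nil_append]

lemma lengths_of_struct {n a : ℕ} {l B C : List ℕ} (hl : l ∈ AvS (n+1))
    (hd : l = a :: n :: B ++ C) (hB : ∀ x ∈ B, a < x ∧ x < n) (hC : ∀ x ∈ C, x < a)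
    (han : a < n) :
    B.length = n-1-a ∧ C.length = a ∧ B.Nodup ∧ C.Nodup := by
  obtain ⟨⟨hlen, hnd, hbd⟩, hAv⟩ := mem_AvS.mp hl
  subst hd
  have hndBC : (B ++ C).Nodup := (hnd.of_cons).of_cons
  have hndB : B.Nodup := (List.sublist_append_left B C).nodup hndBC
  have hndC : C.Nodup := (List.sublist_append_right B C).nodup hndBC
  have hCt : C.toFinset = Finset.range a := by
    apply Finset.Subset.antisymm
    · intro x hx
      simp only [List.mem_toFinset] at hx
      simpa using hC x hx
    · intro v hv
      simp only [Finset.mem_range] at hv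
      have hvl : v ∈ a :: n :: B ++ C := mem_of_mem_AvS hl (by omega)
      simp only [List.mem_toFinset]
      simp only [List.cons_append, List.mem_cons, List.mem_append] at hvl
      rcases hvl with rfl | rfl | h | h
      · omega
      · omega
      · have := hB v h; omega
      · exact h
  have hClen : C.length = a := by
    have := List.card_toFinset C
    rw [hndC.dedup, hCt, Finset.card_range] at this
    omega
  have hlen' : B.length + C.length = n - 1 := by
    simp only [List.cons_append, List.length_cons, List.length_append] at hlen
    omega
  exact ⟨by omega, hClen, hndB, hndC⟩

lemma card_head_lt {n a : ℕ} (han : a < n) :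
    ((AvS (n+1)).filter (fun l => l.getD 0 0 = a)).card = avf (n-1-a) * avf a := by
  classical
  rw [avf, avf, ← Finset.card_product]
  refine Finset.card_bij'
    (fun l _ => ((((l.drop 2).filter (fun x => a < x)).map (fun x => x - (a+1))),
                 (l.drop 2).filter (fun x => x < a)))
    (fun p _ => a :: n :: (p.1.map (fun x => x + (a+1))) ++ p.2) ?_ ?_ ?_ ?_
  · intro l hl
    obtain ⟨hl1, hl2⟩ := Finset.mem_filter.mp hl
    obtain ⟨B, C, rfl, hB, hC⟩ := structL hl1 hl2 han
    obtain ⟨hBlen, hClen, hBnd, hCnd⟩ := lengths_of_struct hl1 rfl hB hC han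
    have hdrop : ((a :: n :: B ++ C) : List ℕ).drop 2 = B ++ C := by simp
    have hsplit := filter_split (fun x hx => (hB x hx).1) hC
    try dsimp only
    rw [hdrop, hsplit.1, hsplit.2]
    have hAvBC : AvP B ∧ AvP C := by
      have hAvl : AvP (a :: n :: B ++ C) := (mem_AvS.mp hl1).2
      exact (avP_decomp han hB hC).mp hAvl
    refine Finset.mem_product.mpr ⟨mem_AvS.mpr ⟨⟨?_, ?_, ?_⟩, ?_⟩, mem_AvS.mpr ⟨⟨?_, ?_, ?_⟩, ?_⟩⟩
    · simpa using hBlen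
    · exact List.Nodup.map_on (fun x hx y hy hxy => by
        have := (hB x hx).1; have := (hB y hy).1; omega) hBnd
    · intro x hx
      obtain ⟨y, hy, rfl⟩ := List.mem_map.mp hx
      have := hB y hy; omega
    · have hid : (B.map (fun x => x - (a+1))).map (fun x => x + (a+1)) = B := by
        rw [List.map_map]
        exact map_eq_self (fun x hx => by have := (hB x hx).1; simp; omega)
      have := avP_map_add (c := a+1) (b := B.map (fun x => x - (a+1)))
      rw [hid] at this
      exact this.mp hAvBC.1
    · exact hClen
    · exact hCnd
    · exact hC
    · exact hAvBC.2
  · rintro ⟨b, c⟩ hp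
    obtain ⟨hb, hc⟩ := Finset.mem_product.mp hp
    dsimp only at hb hc ⊢
    obtain ⟨⟨hblen, hbnd, hbbd⟩, hbAv⟩ := mem_AvS.mp hb
    obtain ⟨⟨hclen, hcnd, hcbd⟩, hcAv⟩ := mem_AvS.mp hc
    set b' := b.map (fun x => x + (a+1)) with hb'
    have hb'mem : ∀ x ∈ b', a < x ∧ x < n := by
      intro x hx
      obtain ⟨y, hy, rfl⟩ := List.mem_map.mp hx
      have := hbbd y hy; omega
    have hb'nd : b'.Nodup := List.Nodup.map (fun x y hxy => by omega) hbnd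
    refine Finset.mem_filter.mpr ⟨mem_AvS.mpr ⟨⟨?_, ?_, ?_⟩, ?_⟩, rfl⟩
    · have hb'len : b'.length = b.length := by rw [hb']; simp
      simp only [List.append_eq, List.cons_append, List.length_cons, List.length_append]
      omega
    · refine List.nodup_cons.mpr ⟨?_, List.nodup_cons.mpr ⟨?_, ?_⟩⟩
      · intro hmem
        simp only [List.append_eq, List.cons_append, List.mem_cons, List.mem_append] at hmem
        rcases hmem with heq | h | h
        · omega
        · have := hb'mem a h; omega
        · have := hcbd a h; omega
      · intro hmem
        simp only [List.append_eq, List.cons_append, List.mem_cons, List.mem_append] at hmem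
        rcases hmem with h | h
        · have := hb'mem n h; omega
        · have := hcbd n h; omega
      · show (b' ++ c).Nodup
        exact List.Nodup.append hb'nd hcnd (fun x hx1 hx2 => by
          have := hb'mem x hx1; have := hcbd x hx2; omega)
    · intro x hx
      simp only [List.append_eq, List.cons_append, List.mem_cons, List.mem_append] at hx
      rcases hx with rfl | rfl | h | h
      · omega
      · omega
      · have := hb'mem x h; omega
      · have := hcbd x h; omega
    · refine (avP_decomp han hb'mem (fun x hx => by have := hcbd x hx; omega)).mpr ⟨?_, ?_⟩
      · exact (avP_map_add (c := a+1) (b := b)).mpr hbAv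
      · exact hcAv
  · intro l hl
    obtain ⟨hl1, hl2⟩ := Finset.mem_filter.mp hl
    obtain ⟨B, C, rfl, hB, hC⟩ := structL hl1 hl2 han
    have hdrop : ((a :: n :: B ++ C) : List ℕ).drop 2 = B ++ C := by simp
    have hsplit := filter_split (fun x hx => (hB x hx).1) hC
    simp only [hdrop, hsplit.1, hsplit.2, List.map_map]
    rw [map_eq_self (l := B) (fun x hx => by have := (hB x hx).1; simp; omega)]
  · rintro ⟨b, c⟩ hp
    obtain ⟨hb, hc⟩ := Finset.mem_product.mp hp
    dsimp only at hb hc ⊢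
    obtain ⟨⟨hblen, hbnd, hbbd⟩, hbAv⟩ := mem_AvS.mp hb
    obtain ⟨⟨hclen, hcnd, hcbd⟩, hcAv⟩ := mem_AvS.mp hc
    have hdrop : ((a :: n :: (b.map (fun x => x + (a+1))) ++ c) : List ℕ).drop 2
        = (b.map (fun x => x + (a+1))) ++ c := by simp
    have hsplit := filter_split (a := a) (B := b.map (fun x => x + (a+1))) (C := c)
      (fun x hx => by obtain ⟨y, hy, rfl⟩ := List.mem_map.mp hx; have := hbbd y hy; omega)
      (fun x hx => by have := hcbd x hx; omega)
    simp only [hdrop, hsplit.1, hsplit.2, List.map_map]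
    rw [map_eq_self (l := b) (fun x hx => by simp)]

lemma avf_succ (n : ℕ) :
    avf (n+1) = avf n + ∑ a ∈ Finset.range n, avf (n-1-a) * avf a := by
  classical
  have hsplit := Finset.card_filter_add_card_filter_not
    (s := AvS (n+1)) (p := fun l => l.getD 0 0 = n)
  rw [avf, ← hsplit, card_head_max]
  congr 1
  have hfib : ∀ l ∈ (AvS (n+1)).filter (fun l => ¬ l.getD 0 0 = n), l.getD 0 0 ∈ Finset.range n := by
    intro l hl
    obtain ⟨hl1, hl2⟩ := Finset.mem_filter.mp hl
    obtain ⟨⟨hlen, hnd, hbd⟩, hAv⟩ := mem_AvS.mp hl1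
    have : l.getD 0 0 ∈ l := getD_mem (by omega)
    have := hbd _ this
    simp only [Finset.mem_range]
    omega
  rw [Finset.card_eq_sum_card_fiberwise hfib]
  refine Finset.sum_congr rfl ?_
  intro a ha
  have han : a < n := Finset.mem_range.mp ha
  rw [← card_head_lt han]
  congr 1
  rw [Finset.filter_filter]
  apply Finset.filter_congr
  intro l _
  constructor
  · rintro ⟨_, h⟩; exact h
  · intro h; exact ⟨by rw [h]; omega, h⟩

lemma avf_zero : avf 0 = 1 := by
  classical
  have : AvS 0 = {([] : List ℕ)} := by
    ext l
    rw [mem_AvS]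
    constructor
    · rintro ⟨⟨hlen, _, _⟩, _⟩
      simpa using List.length_eq_zero_iff.mp hlen
    · intro h
      rcases Finset.mem_singleton.mp h with rfl
      refine ⟨⟨rfl, List.nodup_nil, by simp⟩, ?_, ?_⟩
      · rintro ⟨i, j, k, _, _, hk, _⟩; simp at hk
      · rintro ⟨i, k, _, hk, _⟩; simp at hk
  rw [avf, this, Finset.card_singleton]

lemma motzkin_eq_avf (n : ℕ) : motzkin n = avf n := by
  induction n using Nat.strong_induction_on with
  | _ n ih =>
    match n with
    | 0 => rw [avf_zero]; simp [motzkin]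
    | n + 1 =>
      rw [motzkin, avf_succ, ih n (by omega)]
      congr 1
      rw [← Finset.sum_attach (Finset.range n) (fun a => avf (n-1-a) * avf a)]
      refine Finset.sum_congr rfl ?_
      intro k _
      have hk : k.1 < n := Finset.mem_range.mp k.2
      rw [ih k.1 (by omega), ih (n-1-k.1) (by omega), Nat.mul_comm]

def permToList {n : ℕ} (π : Equiv.Perm (Fin n)) : List ℕ := List.ofFn (fun i => (π i : ℕ))

lemma permToList_length {n : ℕ} (π : Equiv.Perm (Fin n)) : (permToList π).length = n := by
  simp [permToList]

lemma getD_permToList {n : ℕ} (π : Equiv.Perm (Fin n)) (i : ℕ) (h : i < n) :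
    (permToList π).getD i 0 = π ⟨i, h⟩ := by
  rw [permToList, List.getD_eq_getElem _ _ (by simpa using h)]
  simp

lemma tr213 {n : ℕ} (π : Equiv.Perm (Fin n)) : C213L (permToList π) ↔ Contains213 π := by
  constructor
  · rintro ⟨i, j, k, hij, hjk, hk, v1, v2⟩
    rw [permToList_length] at hk
    have hkn : k < n := hk
    have hjn : j < n := Nat.lt_trans hjk hkn
    have hin : i < n := Nat.lt_trans hij hjn
    rw [getD_permToList π i hin, getD_permToList π j hjn] at v1
    rw [getD_permToList π i hin, getD_permToList π k hkn] at v2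
    exact ⟨⟨i, hin⟩, ⟨j, hjn⟩, ⟨k, hkn⟩, hij, hjk, v1, v2⟩
  · rintro ⟨i, j, k, hij, hjk, v1, v2⟩
    refine ⟨i.1, j.1, k.1, hij, hjk, by rw [permToList_length]; exact k.2, ?_, ?_⟩
    · rw [getD_permToList π i.1 i.2, getD_permToList π j.1 j.2]
      simp only [Fin.eta]
      exact v1
    · rw [getD_permToList π i.1 i.2, getD_permToList π k.1 k.2]
      simp only [Fin.eta]
      exact v2

lemma tr123 {n : ℕ} (π : Equiv.Perm (Fin n)) : C123L (permToList π) ↔ Contains12'3 π := by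
  constructor
  · rintro ⟨i, k, hik, hk, v1, v2⟩
    rw [permToList_length] at hk
    have hkn : k < n := hk
    have hi1n : i + 1 < n := Nat.lt_trans hik hkn
    have hin : i < n := Nat.lt_trans (Nat.lt_succ_self i) hi1n
    rw [getD_permToList π i hin, getD_permToList π (i+1) hi1n] at v1
    rw [getD_permToList π (i+1) hi1n, getD_permToList π k hkn] at v2
    exact ⟨⟨i, hin⟩, ⟨i+1, hi1n⟩, ⟨k, hkn⟩, rfl, hik, v1, v2⟩
  · rintro ⟨i, i', k, hii', hik, v1, v2⟩
    have hi1n : i.1 + 1 < n := by rw [← hii']; exact i'.2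
    have hfin : (⟨i.1+1, hi1n⟩ : Fin n) = i' := Fin.ext (by rw [hii'])
    refine ⟨i.1, k.1, by rw [Fin.lt_def] at hik; omega,
      by rw [permToList_length]; exact k.2, ?_, ?_⟩
    · rw [getD_permToList π i.1 i.2, getD_permToList π (i.1+1) hi1n, hfin]
      simp only [Fin.eta]
      exact v1
    · rw [getD_permToList π (i.1+1) hi1n, getD_permToList π k.1 k.2, hfin]
      simp only [Fin.eta]
      exact v2

lemma permToList_mem_AvS {n : ℕ} (π : Equiv.Perm (Fin n))
    (hπ : ¬ Contains213 π ∧ ¬ Contains12'3 π) : permToList π ∈ AvS n := by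
  refine mem_AvS.mpr ⟨⟨permToList_length π, ?_, ?_⟩, ?_, ?_⟩
  · rw [permToList, List.nodup_ofFn]
    exact Fin.val_injective.comp π.injective
  · intro x hx
    rw [permToList, List.mem_ofFn] at hx
    obtain ⟨i, rfl⟩ := hx
    exact (π i).2
  · rw [tr213]; exact hπ.1
  · rw [tr123]; exact hπ.2

theorem stmt11 (n : ℕ) :
    Nat.card {π : Equiv.Perm (Fin n) // ¬ Contains213 π ∧ ¬ Contains12'3 π}
      = motzkin n := by
  classical
  rw [motzkin_eq_avf, avf, ← Nat.card_eq_finsetCard]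
  apply Nat.card_congr
  refine Equiv.ofBijective
    (fun p => ⟨permToList p.1, permToList_mem_AvS p.1 p.2⟩) ⟨?_, ?_⟩
  · rintro ⟨π, hπ⟩ ⟨σ, hσ⟩ he
    simp only [Subtype.mk.injEq] at he
    refine Subtype.ext (Equiv.ext fun i => Fin.ext ?_)
    show ((π i : Fin n) : ℕ) = ((σ i : Fin n) : ℕ)
    have h1 := getD_permToList π i.1 i.2
    have h2 := getD_permToList σ i.1 i.2
    rw [he] at h1
    rw [Fin.eta] at h1 h2
    omega
  · rintro ⟨l, hl⟩
    obtain ⟨⟨hlen, hnd, hbd⟩, hAv⟩ := mem_AvS.mp hl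
    have hgb : ∀ i : Fin n, l.getD i.1 0 < n := by
      intro i
      exact hbd _ (getD_mem (by omega))
    set g : Fin n → Fin n := fun i => ⟨l.getD i.1 0, hgb i⟩ with hg
    have ginj : Function.Injective g := by
      intro i j hij
      rw [hg] at hij
      simp only [Fin.mk.injEq] at hij
      rw [List.getD_eq_getElem l 0 (show (i:ℕ) < l.length by omega),
        List.getD_eq_getElem l 0 (show (j:ℕ) < l.length by omega)] at hij
      have := (List.Nodup.getElem_inj_iff hnd).mp hij
      exact Fin.ext this
    let π := Equiv.ofBijective g (Finite.injective_iff_bijective.mp ginj)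
    have hπl : permToList π = l := by
      refine List.ext_getElem (by rw [permToList_length, hlen]) ?_
      intro i h1 h2
      have h3 : i < n := by rwa [permToList_length] at h1
      have := getD_permToList π i h3
      rw [List.getD_eq_getElem _ _ h1] at this
      rw [this]
      show (g ⟨i, h3⟩).1 = l[i]
      rw [hg]
      simp only
      rw [List.getD_eq_getElem _ _ (by omega)]
    refine ⟨⟨π, ?_, ?_⟩, ?_⟩
    · rw [← tr213, hπl]; exact hAv.1
    · rw [← tr123, hπl]; exact hAv.2
    · exact Subtype.ext hπl
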